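/- For every integer n ≥ 2, the alternating sum ∑_{k=0}^{n} (-1)^k * C(n,k) / (n*k + n - 1) equals n^n * n! * ∏_{k=0}^{n} 1/(n*k + n - 1). -/

import Mathlib

lemma key (n : ℕ) : ∀ x : ℝ, (∀ k ≤ n, x + k ≠ 0) →
    ∑ k ∈ Finset.range (n + 1), (-1 : ℝ) ^ k * (n.choose k) / (x + k)
      = n.factorial / ∏ k ∈ Finset.range (n + 1), (x + k) := by
  induction n with
  | zero => intro x hx; simp
  | succ n ih =>
    intro x hx
    have hx0 : x ≠ 0 := by simpa using hx 0 (Nat.zero_le _)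
    have hx' : ∀ k ≤ n, (x + 1) + k ≠ 0 := by
      intro k hk
      have := hx (k + 1) (by omega)
      push_cast at this ⊢
      intro h; apply this; linarith
    have hxn : ∀ k ≤ n, x + k ≠ 0 := fun k hk => hx k (by omega)
    have hS : ∑ k ∈ Finset.range (n + 2), (-1 : ℝ) ^ k * ((n+1).choose k) / (x + k)
        = (∑ k ∈ Finset.range (n + 1), (-1 : ℝ) ^ k * (n.choose k) / (x + k))
          - ∑ k ∈ Finset.range (n + 1), (-1 : ℝ) ^ k * (n.choose k) / ((x + 1) + k) := by
      rw [Finset.sum_range_succ' _ (n + 1)]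
      have : ∀ k ∈ Finset.range (n + 1),
          (-1 : ℝ) ^ (k+1) * ((n+1).choose (k+1)) / (x + ((k+1 : ℕ) : ℝ))
          = (-1 : ℝ) ^ (k+1) * (n.choose k) / (x + ((k+1 : ℕ) : ℝ))
            + (-1 : ℝ) ^ (k+1) * (n.choose (k+1)) / (x + ((k+1 : ℕ) : ℝ)) := by
        intro k hk
        rw [Nat.choose_succ_succ]
        push_cast
        ring
      rw [Finset.sum_congr rfl this, Finset.sum_add_distrib]
      have e1 : ∑ k ∈ Finset.range (n + 1),
          (-1 : ℝ) ^ (k+1) * (n.choose k) / (x + ((k+1 : ℕ) : ℝ))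
          = - ∑ k ∈ Finset.range (n + 1), (-1 : ℝ) ^ k * (n.choose k) / ((x + 1) + k) := by
        rw [← Finset.sum_neg_distrib]
        apply Finset.sum_congr rfl
        intro k hk
        push_cast
        ring_nf
      have e2 : ∑ k ∈ Finset.range (n + 1),
          (-1 : ℝ) ^ (k+1) * (n.choose (k+1)) / (x + ((k+1 : ℕ) : ℝ))
          = (∑ k ∈ Finset.range (n + 1), (-1 : ℝ) ^ k * (n.choose k) / (x + k)) - 1 / x := by
        rw [Finset.sum_range_succ' (fun k => (-1 : ℝ) ^ k * (n.choose k) / (x + k)) n]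
        simp only [Nat.choose_zero_right, Nat.cast_one, pow_zero]
        rw [Finset.sum_range_succ]
        simp [Nat.choose_succ_self]
      rw [e1, e2]
      simp only [Nat.choose_zero_right]
      push_cast
      ring
    rw [hS, ih x hxn, ih (x + 1) hx']
    have hprod1 : ∏ k ∈ Finset.range (n + 1), ((x+1) + (k:ℝ))
        = (∏ k ∈ Finset.range (n + 2), (x + (k:ℝ))) / x := by
      rw [eq_div_iff hx0, Finset.prod_range_succ' (fun k => x + (k:ℝ))]
      simp only [Nat.cast_zero, add_zero, Nat.cast_add, Nat.cast_one]
      congr 1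
      exact Finset.prod_congr rfl (fun k _ => by ring)
    have hprod2 : ∏ k ∈ Finset.range (n + 2), (x + (k:ℝ))
        = (∏ k ∈ Finset.range (n + 1), (x + (k:ℝ))) * (x + ((n:ℝ)+1)) := by
      rw [Finset.prod_range_succ]; push_cast; ring
    have hP : (∏ k ∈ Finset.range (n + 1), (x + (k:ℝ))) ≠ 0 := by
      apply Finset.prod_ne_zero_iff.mpr
      intro k hk; exact hxn k (by simpa using Nat.lt_succ_iff.mp (Finset.mem_range.mp hk))
    have hlast : x + ((n:ℝ)+1) ≠ 0 := by
      have := hx (n+1) le_rfl; push_cast at this ⊢; convert this using 2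
    have hfac : (((n+1).factorial : ℕ) : ℝ) = ((n:ℝ)+1) * n.factorial := by
      rw [Nat.factorial_succ]; push_cast; ring
    rw [hprod1, hprod2, hfac]
    field_simp
    ring

theorem stmt_0 (n : ℕ) (hn : 2 ≤ n) :
    ∑ k ∈ Finset.range (n + 1),
      (-1 : ℝ) ^ k * (n.choose k) / (n * k + n - 1) =
    (n : ℝ) ^ n * n.factorial *
      ∏ k ∈ Finset.range (n + 1), (1 : ℝ) / (n * k + n - 1) := by
  have hn2 : (2:ℝ) ≤ n := by exact_mod_cast hn
  have hn0 : (n:ℝ) ≠ 0 := by linarith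
  set x : ℝ := ((n:ℝ) - 1) / n with hxdef
  have hden : ∀ k : ℕ, (n:ℝ) * k + n - 1 = n * (x + k) := by
    intro k; rw [hxdef]; field_simp; ring
  have hpos : ∀ k : ℕ, (0:ℝ) < (n:ℝ) * k + n - 1 := by
    intro k
    have : (0:ℝ) ≤ (n:ℝ) * k := by positivity
    linarith
  have hx : ∀ k ≤ n, x + (k:ℝ) ≠ 0 := by
    intro k _
    have h := hpos k
    rw [hden k] at h
    intro h0
    rw [h0, mul_zero] at h
    exact lt_irrefl 0 h
  have hkey := key n x hx
  have hP : (∏ k ∈ Finset.range (n + 1), (x + (k:ℝ))) ≠ 0 := by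
    apply Finset.prod_ne_zero_iff.mpr
    intro k hk
    exact hx k (Nat.lt_succ_iff.mp (Finset.mem_range.mp hk))
  have hL : ∑ k ∈ Finset.range (n + 1), (-1 : ℝ) ^ k * (n.choose k) / (n * k + n - 1)
      = (1/n) * ∑ k ∈ Finset.range (n + 1), (-1 : ℝ) ^ k * (n.choose k) / (x + k) := by
    rw [Finset.mul_sum]
    apply Finset.sum_congr rfl
    intro k _
    rw [hden k, div_mul_div_comm, one_mul]
  have hR : ∏ k ∈ Finset.range (n + 1), (1 : ℝ) / (n * k + n - 1)
      = (1/n) ^ (n+1) * (∏ k ∈ Finset.range (n + 1), (x + (k:ℝ)))⁻¹ := by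
    rw [← Finset.prod_inv_distrib,
      show ((1:ℝ)/n)^(n+1) = ∏ _k ∈ Finset.range (n+1), (1/(n:ℝ)) by
        rw [Finset.prod_const, Finset.card_range],
      ← Finset.prod_mul_distrib]
    apply Finset.prod_congr rfl
    intro k _
    rw [hden k, one_div, mul_inv]
    rw [one_div]
  rw [hL, hkey, hR]
  field_simp
  ring
  rw [mul_right_comm (n:ℝ), mul_inv_cancel₀ hn0, one_mul, ← mul_pow, mul_inv_cancel₀ hn0, one_pow]
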